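/- Let f be a strictly γ^{1/2}-convex, bounded function on [0,∞) with f(0) > 0. If some fixed point x of f satisfies f'(x) > 1, then f has exactly three fixed points, and the other two fixed points y and z satisfy f'(y) < 1 and f'(z) < 1. -/

import Mathlib

open Set Filter Topology

private lemma exists_fixed_between' (f : ℝ → ℝ) (hc : ContinuousOn f (Ici 0))
    {a b : ℝ} (ha : 0 ≤ a) (hab : a ≤ b) (hga : a < f a) (hgb : f b < b) :
    ∃ w, a < w ∧ w < b ∧ f w = w := by
  set g : ℝ → ℝ := fun t => f t - t with hg
  have hgc : ContinuousOn g (Icc a b) :=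
    ((hc.mono (Icc_subset_Ici_self.trans (by rw [Ici_subset_Ici]; exact ha))).sub
      continuousOn_id)
  have h0 : (0:ℝ) ∈ Icc (g b) (g a) := ⟨by simp [hg]; linarith, by simp [hg]; linarith⟩
  obtain ⟨w, hw, hw0⟩ := intermediate_value_Icc' hab hgc h0
  have hfw : f w = w := by have : f w - w = 0 := hw0; linarith
  refine ⟨w, ?_, ?_, hfw⟩
  · rcases eq_or_lt_of_le hw.1 with h | h
    · exfalso; rw [← h] at hfw; linarith
    · exact h
  · rcases eq_or_lt_of_le hw.2 with h | h
    · exfalso; rw [h] at hfw; linarith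
    · exact h

private lemma mvt_one' (f : ℝ → ℝ) (hf : ContDiffOn ℝ 3 f (Ici 0))
    {a b : ℝ} (ha : 0 ≤ a) (hab : a < b) (hfa : f a = a) (hfb : f b = b) :
    ∃ c ∈ Ioo a b, derivWithin f (Ici 0) c = 1 := by
  have hcont : ContinuousOn f (Icc a b) :=
    hf.continuousOn.mono (Icc_subset_Ici_self.trans (by rw [Ici_subset_Ici]; exact ha))
  have hder : ∀ t ∈ Ioo a b, HasDerivAt f (deriv f t) t := by
    intro t ht
    have ht0 : 0 < t := lt_of_le_of_lt ha ht.1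
    exact ((hf.differentiableOn (by norm_num) t (le_of_lt ht0)).differentiableAt
      (Ici_mem_nhds ht0)).hasDerivAt
  obtain ⟨c, hc, hc1⟩ := exists_hasDerivAt_eq_slope f (deriv f) hab hcont hder
  have hc0 : 0 < c := lt_of_le_of_lt ha hc.1
  have hcv : deriv f c = 1 := by
    rw [hc1, hfa, hfb, div_self (sub_ne_zero.2 (ne_of_gt hab))]
  refine ⟨c, hc, ?_⟩
  rw [(hder c hc).hasDerivWithinAt.derivWithin (uniqueDiffOn_Ici 0 c (le_of_lt hc0)), hcv]

private lemma no_three' (f : ℝ → ℝ)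
    (hfc : StrictConvexOn ℝ (Ici 0) (fun t => 1 / Real.sqrt |derivWithin f (Ici 0) t|))
    {p q r : ℝ} (hp : 0 ≤ p) (hpq : p < q) (hqr : q < r)
    (h1 : derivWithin f (Ici 0) p = 1) (h2 : derivWithin f (Ici 0) q = 1)
    (h3 : derivWithin f (Ici 0) r = 1) : False := by
  set H : ℝ → ℝ := fun t => 1 / Real.sqrt |derivWithin f (Ici 0) t| with hH
  have Hp : H p = 1 := by simp [hH, h1]
  have Hq : H q = 1 := by simp [hH, h2]
  have Hr : H r = 1 := by simp [hH, h3]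
  have hrp : (0:ℝ) < r - p := by linarith
  set A : ℝ := (r - q) / (r - p) with hA
  set B : ℝ := (q - p) / (r - p) with hB
  have hA0 : 0 < A := div_pos (by linarith) hrp
  have hB0 : 0 < B := div_pos (by linarith) hrp
  have hAB : A + B = 1 := by
    rw [hA, hB, ← add_div, div_eq_one_iff_eq (ne_of_gt hrp)]; ring
  have hq : A • p + B • r = q := by
    simp only [smul_eq_mul, hA, hB]; field_simp; ring
  have := hfc.2 hp (le_trans hp (by linarith : p ≤ r)) (by linarith : p ≠ r) hA0 hB0 hAB
  rw [hq, Hp, Hq, Hr] at this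
  simp only [smul_eq_mul] at this
  linarith

private lemma left_lt' (g : ℝ → ℝ) {y c : ℝ} (h : HasDerivAt g c y) (hc : 0 < c)
    {a : ℝ} (ha : a < y) : ∃ t, a < t ∧ t < y ∧ g t < g y := by
  have hslope := hasDerivAt_iff_tendsto_slope.1 h
  have hev : ∀ᶠ t in 𝓝[≠] y, 0 < slope g y t := hslope.eventually (eventually_gt_nhds hc)
  have hev' : ∀ᶠ t in 𝓝[<] y, 0 < slope g y t :=
    hev.filter_mono (nhdsWithin_mono y fun t ht => ne_of_lt ht)
  have hmem : Ioo a y ∈ 𝓝[<] y := Ioo_mem_nhdsLT_of_mem ⟨ha, le_refl y⟩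
  obtain ⟨t, hts, htm⟩ := (hev'.and (eventually_of_mem hmem fun t ht => ht)).exists
  refine ⟨t, htm.1, htm.2, ?_⟩
  rw [slope_def_field] at hts
  rcases div_pos_iff.1 hts with ⟨h1, h2⟩ | ⟨h1, h2⟩
  · linarith [htm.2]
  · linarith

private lemma right_lt' (g : ℝ → ℝ) {y c : ℝ} (h : HasDerivAt g c y) (hc : 0 < c)
    {b : ℝ} (hb : y < b) : ∃ t, y < t ∧ t < b ∧ g y < g t := by
  have hslope := hasDerivAt_iff_tendsto_slope.1 h
  have hev : ∀ᶠ t in 𝓝[≠] y, 0 < slope g y t := hslope.eventually (eventually_gt_nhds hc)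
  have hev' : ∀ᶠ t in 𝓝[>] y, 0 < slope g y t :=
    hev.filter_mono (nhdsWithin_mono y fun t ht => ne_of_gt ht)
  have hmem : Ioo y b ∈ 𝓝[>] y := Ioo_mem_nhdsGT_of_mem ⟨le_refl y, hb⟩
  obtain ⟨t, hts, htm⟩ := (hev'.and (eventually_of_mem hmem fun t ht => ht)).exists
  refine ⟨t, htm.1, htm.2, ?_⟩
  rw [slope_def_field] at hts
  rcases div_pos_iff.1 hts with ⟨h1, h2⟩ | ⟨h1, h2⟩
  · linarith
  · linarith [htm.1]

private lemma no_four' (f : ℝ → ℝ) (hf : ContDiffOn ℝ 3 f (Ici 0))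
    (hfc : StrictConvexOn ℝ (Ici 0) (fun t => 1 / Real.sqrt |derivWithin f (Ici 0) t|))
    {p q r s : ℝ} (hp : 0 ≤ p) (h1 : p < q) (h2 : q < r) (h3 : r < s)
    (fp : f p = p) (fq : f q = q) (fr : f r = r) (fs : f s = s) : False := by
  obtain ⟨c1, hc1, hd1⟩ := mvt_one' f hf hp h1 fp fq
  obtain ⟨c2, hc2, hd2⟩ := mvt_one' f hf (by linarith : (0:ℝ) ≤ q) h2 fq fr
  obtain ⟨c3, hc3, hd3⟩ := mvt_one' f hf (by linarith : (0:ℝ) ≤ r) h3 fr fs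
  exact no_three' f hfc (le_of_lt (lt_of_le_of_lt hp hc1.1))
    (lt_trans hc1.2 hc2.1) (lt_trans hc2.2 hc3.1) hd1 hd2 hd3

/-- Let `f` be strictly γ^{1/2}-convex, bounded, positive on `[0,∞)` with `f 0 > 0`.
If some fixed point `x` satisfies `f'(x) > 1`, then `f` has exactly three fixed points,
and the other two, `y` and `z`, satisfy `f'(y) < 1` and `f'(z) < 1`. -/
theorem threeFixedPoints_of_slopeGtOne (f : ℝ → ℝ) (x : ℝ)
    (hf : ContDiffOn ℝ 3 f (Ici 0))
    (hpos : ∀ t ∈ Ici (0:ℝ), 0 < f t)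
    (hf0 : 0 < f 0)
    (hbdd : ∃ M : ℝ, ∀ t ∈ Ici (0:ℝ), f t ≤ M)
    (hfmono : MonotoneOn f (Ici 0) ∨ AntitoneOn f (Ici 0))
    (hf' : ∀ t ∈ Ici (0:ℝ), derivWithin f (Ici 0) t ≠ 0)
    (hfc : StrictConvexOn ℝ (Ici 0) (fun t => 1 / Real.sqrt |derivWithin f (Ici 0) t|))
    (hx : 0 ≤ x) (hxfix : f x = x)
    (hxslope : 1 < derivWithin f (Ici 0) x) :
    ∃ y z : ℝ, 0 ≤ y ∧ 0 ≤ z ∧ f y = y ∧ f z = z ∧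
      x ≠ y ∧ x ≠ z ∧ y ≠ z ∧
      {t : ℝ | 0 ≤ t ∧ f t = t} = {x, y, z} ∧
      derivWithin f (Ici 0) y < 1 ∧ derivWithin f (Ici 0) z < 1 := by
  obtain ⟨M, hM⟩ := hbdd
  have hx0 : 0 < x := hxfix ▸ hpos x hx
  -- the derivative facts at interior points
  have hDA : ∀ t : ℝ, 0 < t → HasDerivAt f (derivWithin f (Ici 0) t) t := by
    intro t ht
    have h := ((hf.differentiableOn (by norm_num) t (le_of_lt ht)).differentiableAt
      (Ici_mem_nhds ht)).hasDerivAt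
    rwa [← h.hasDerivWithinAt.derivWithin (uniqueDiffOn_Ici 0 t (le_of_lt ht))] at h
  set g : ℝ → ℝ := fun t => f t - t with hg
  have hDg : ∀ t : ℝ, 0 < t → HasDerivAt g (derivWithin f (Ici 0) t - 1) t := by
    intro t ht
    exact (hDA t ht).sub (hasDerivAt_id t)
  -- find y ∈ (0, x)
  obtain ⟨t1, ht10, ht1x, htg⟩ := left_lt' g (hDg x hx0) (by linarith) (show (0:ℝ) < x from hx0)
  have hgx : g x = 0 := by simp [hg, hxfix]
  rw [hgx] at htg
  obtain ⟨y, hy0, hyt, hyfix⟩ := exists_fixed_between' f hf.continuousOn (le_refl 0)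
    (le_of_lt ht10) hf0 (by simp [hg] at htg; linarith)
  have hyx : y < x := lt_trans hyt ht1x
  -- find z ∈ (x, ∞)
  set T : ℝ := max x M + 1 with hT
  have hxT : x < T := lt_of_le_of_lt (le_max_left x M) (by linarith)
  obtain ⟨t2, hxt2, ht2T, htg2⟩ := right_lt' g (hDg x hx0) (by linarith) hxT
  rw [hgx] at htg2
  have hgT : f T < T := by
    have := hM T (by rw [mem_Ici, hT]; have := le_max_left x M; linarith)
    have : f T ≤ M := this
    have hMT : M < T := lt_of_le_of_lt (le_max_right x M) (by linarith)
    linarith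
  obtain ⟨z, hzt2, hzT, hzfix⟩ := exists_fixed_between' f hf.continuousOn
    (by linarith : (0:ℝ) ≤ t2) (le_of_lt ht2T) (by simp [hg] at htg2; linarith) hgT
  have hxz : x < z := lt_trans hxt2 hzt2
  have hy0' : (0:ℝ) ≤ y := le_of_lt hy0
  have hz0' : (0:ℝ) ≤ z := by linarith
  -- MVT points
  obtain ⟨c1, hc1, hd1⟩ := mvt_one' f hf hy0' hyx hyfix hxfix
  obtain ⟨c2, hc2, hd2⟩ := mvt_one' f hf hx hxz hxfix hzfix
  -- slopes at y and z
  have hdy : derivWithin f (Ici 0) y < 1 := by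
    rcases lt_trichotomy (derivWithin f (Ici 0) y) 1 with h | h | h
    · exact h
    · exact absurd h (fun h => no_three' f hfc hy0' hc1.1 (lt_trans hc1.2 hc2.1) h hd1 hd2)
    · exfalso
      obtain ⟨t0, ht00, ht0y, htg0⟩ := left_lt' g (hDg y hy0) (by linarith)
        (show (0:ℝ) < y from hy0)
      have hgy : g y = 0 := by simp [hg, hyfix]
      rw [hgy] at htg0
      obtain ⟨w, hw0, hwt, hwfix⟩ := exists_fixed_between' f hf.continuousOn (le_refl 0)
        (le_of_lt ht00) hf0 (by simp [hg] at htg0; linarith)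
      exact no_four' f hf hfc (le_of_lt hw0) (lt_trans hwt ht0y) hyx hxz hwfix hyfix hxfix hzfix
  have hdz : derivWithin f (Ici 0) z < 1 := by
    rcases lt_trichotomy (derivWithin f (Ici 0) z) 1 with h | h | h
    · exact h
    · exact absurd h (fun h => no_three' f hfc (le_of_lt (lt_of_le_of_lt hy0' hc1.1))
        (lt_trans hc1.2 hc2.1) hc2.2 hd1 hd2 h)
    · exfalso
      have hz0 : 0 < z := by linarith
      set T' : ℝ := max z M + 1 with hT'
      have hzT' : z < T' := lt_of_le_of_lt (le_max_left z M) (by linarith)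
      obtain ⟨t3, hzt3, ht3T, htg3⟩ := right_lt' g (hDg z hz0) (by linarith) hzT'
      have hgz : g z = 0 := by simp [hg, hzfix]
      rw [hgz] at htg3
      have hgT' : f T' < T' := by
        have h1 : f T' ≤ M := hM T' (by rw [mem_Ici, hT']; have := le_max_left z M; linarith)
        have hMT : M < T' := lt_of_le_of_lt (le_max_right z M) (by linarith)
        linarith
      obtain ⟨w, hwt3, hwT, hwfix⟩ := exists_fixed_between' f hf.continuousOn
        (by linarith : (0:ℝ) ≤ t3) (le_of_lt ht3T) (by simp [hg] at htg3; linarith) hgT'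
      exact no_four' f hf hfc hy0' hyx hxz (lt_trans hzt3 hwt3) hyfix hxfix hzfix hwfix
  refine ⟨y, z, hy0', hz0', hyfix, hzfix, ne_of_gt hyx, ne_of_lt hxz, ne_of_lt (by linarith), ?_, hdy, hdz⟩
  ext t
  simp only [mem_setOf_eq, mem_insert_iff, mem_singleton_iff]
  constructor
  · rintro ⟨ht0, htfix⟩
    by_contra hcon
    push_neg at hcon
    obtain ⟨htx, hty, htz⟩ := hcon
    rcases lt_trichotomy t y with h | h | h
    · exact no_four' f hf hfc ht0 h hyx hxz htfix hyfix hxfix hzfix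
    · exact hty h
    rcases lt_trichotomy t x with h' | h' | h'
    · exact no_four' f hf hfc hy0' h h' hxz hyfix htfix hxfix hzfix
    · exact htx h'
    rcases lt_trichotomy t z with h'' | h'' | h''
    · exact no_four' f hf hfc hy0' hyx h' h'' hyfix hxfix htfix hzfix
    · exact htz h''
    · exact no_four' f hf hfc hy0' hyx hxz h'' hyfix hxfix hzfix htfix
  · rintro (rfl | rfl | rfl)
    · exact ⟨hx, hxfix⟩
    · exact ⟨hy0', hyfix⟩
    · exact ⟨hz0', hzfix⟩
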